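/- If A ⊆ ℝ² is a set whose distance set satisfies Δ(A) ⊆ {n/2 + 1/8 : n ∈ ℕ}, then A has at most 3 elements. -/

import Mathlib

private lemma zmod8_diag : ∀ x : ZMod 8, 2 * (4 * x + 1) ^ 2 = 2 := by decide

private lemma zmod8_off : ∀ x y z : ZMod 8,
    (4 * x + 1) ^ 2 + (4 * y + 1) ^ 2 - (4 * z + 1) ^ 2 = 1 := by decide

private lemma zmod8_det :
    (Matrix.of fun i j : Fin 3 => if i = j then (2 : ZMod 8) else 1).det = 4 := by decide

private lemma no_four (p : Fin 4 → EuclideanSpace ℝ (Fin 2)) (hp : Function.Injective p)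
    (h : ∀ i j : Fin 4, i ≠ j → ∃ n : ℕ, dist (p i) (p j) = (n : ℝ) / 2 + 1 / 8) : False := by
  have hd : ∀ i j : Fin 4, i ≠ j → ∃ n : ℕ, dist (p i) (p j) = (4 * (n : ℝ) + 1) / 8 := by
    intro i j hij
    obtain ⟨n, hn⟩ := h i j hij
    exact ⟨n, by rw [hn]; ring⟩
  choose! N hN using hd
  set v : Fin 3 → EuclideanSpace ℝ (Fin 2) := fun i => p i.succ - p 0 with hv
  -- norms of v i and of differences
  have hnorm : ∀ i : Fin 3, ‖v i‖ = (4 * (N i.succ 0 : ℝ) + 1) / 8 := by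
    intro i
    have : ‖v i‖ = dist (p i.succ) (p 0) := by rw [dist_eq_norm]
    rw [this, hN i.succ 0 (Fin.succ_ne_zero i)]
  have hnormd : ∀ i j : Fin 3, i ≠ j →
      ‖v i - v j‖ = (4 * (N i.succ j.succ : ℝ) + 1) / 8 := by
    intro i j hij
    have h1 : v i - v j = p i.succ - p j.succ := by simp [hv]
    have h2 : i.succ ≠ j.succ := fun hc => hij (Fin.succ_inj.mp hc)
    rw [h1, ← dist_eq_norm, hN i.succ j.succ h2]
  -- Gram matrix
  set G : Matrix (Fin 3) (Fin 3) ℝ :=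
    Matrix.of (fun i j => (inner ℝ (v i) (v j) : ℝ)) with hG
  -- integer matrix
  set a : Fin 3 → ℤ := fun i => 4 * (N i.succ 0 : ℤ) + 1 with ha
  set b : Fin 3 → Fin 3 → ℤ := fun i j => 4 * (N i.succ j.succ : ℤ) + 1 with hb
  set M : Matrix (Fin 3) (Fin 3) ℤ :=
    Matrix.of (fun i j => if i = j then 2 * a i ^ 2 else a i ^ 2 + a j ^ 2 - b i j ^ 2) with hM
  -- M is 128 times G
  have hMG : M.map (Int.cast : ℤ → ℝ) = (128 : ℝ) • G := by
    ext i j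
    simp only [Matrix.map_apply, Matrix.smul_apply, hM, hG, Matrix.of_apply, smul_eq_mul]
    by_cases hij : i = j
    · subst hij
      rw [if_pos rfl, real_inner_self_eq_norm_mul_norm, hnorm i]
      push_cast [ha]
      ring
    · rw [if_neg hij, real_inner_eq_norm_mul_self_add_norm_mul_self_sub_norm_sub_mul_self_div_two,
        hnorm i, hnorm j, hnormd i j hij]
      push_cast [ha, hb]
      ring
  -- the vectors are linearly dependent
  have hdep : ¬ LinearIndependent ℝ v := by
    intro hli
    have hle := hli.fintype_card_le_finrank
    rw [finrank_euclideanSpace_fin] at hle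
    simp at hle
  obtain ⟨c, hcs, i0, hci0⟩ := Fintype.not_linearIndependent_iff.mp hdep
  have hGc : G.mulVec c = 0 := by
    funext i
    have : (G.mulVec c) i = (inner ℝ (v i) (∑ j, c j • v j) : ℝ) := by
      rw [inner_sum]
      simp only [Matrix.mulVec, dotProduct, hG, Matrix.of_apply,
        real_inner_smul_right]
      exact Finset.sum_congr rfl fun j _ => mul_comm _ _
    rw [Pi.zero_apply, this, hcs, inner_zero_right]
  have hdetG : G.det = 0 := by
    rw [← Matrix.exists_mulVec_eq_zero_iff]
    refine ⟨c, fun hc => hci0 ?_, hGc⟩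
    rw [hc]; rfl
  -- hence the integer determinant vanishes
  have hdetM : M.det = 0 := by
    have h1 : ((M.det : ℤ) : ℝ) = (M.map (Int.cast : ℤ → ℝ)).det :=
      (Int.castRingHom ℝ).map_det M
    rw [hMG, Matrix.det_smul, hdetG, mul_zero] at h1
    exact_mod_cast h1
  -- but mod 8 the determinant is 4
  have hmap : M.map (Int.cast : ℤ → ZMod 8) =
      Matrix.of fun i j : Fin 3 => if i = j then (2 : ZMod 8) else 1 := by
    ext i j
    simp only [Matrix.map_apply, hM, Matrix.of_apply, ha, hb]
    by_cases hij : i = j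
    · rw [if_pos hij, if_pos hij]
      push_cast
      exact zmod8_diag _
    · rw [if_neg hij, if_neg hij]
      push_cast
      exact zmod8_off _ _ _
  have h4 : (Int.castRingHom (ZMod 8)) M.det = 4 := by
    rw [(Int.castRingHom (ZMod 8)).map_det M, RingHom.mapMatrix_apply, Int.coe_castRingHom, hmap, zmod8_det]
  rw [hdetM] at h4
  simp at h4
  exact absurd h4 (by decide)

private lemma no_finset_four (A : Set (EuclideanSpace ℝ (Fin 2)))
    (hA : ∀ a ∈ A, ∀ a' ∈ A, a ≠ a' → ∃ n : ℕ, dist a a' = (n : ℝ) / 2 + 1 / 8)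
    (s : Finset (EuclideanSpace ℝ (Fin 2))) (hsub : ↑s ⊆ A) (hcard : s.card = 4) : False := by
  have e := s.equivFin
  rw [hcard] at e
  set p : Fin 4 → EuclideanSpace ℝ (Fin 2) := fun i => (e.symm i : EuclideanSpace ℝ (Fin 2))
    with hpdef
  have hp : Function.Injective p := by
    intro i j hij
    have := Subtype.ext hij
    exact e.symm.injective this
  refine no_four p hp fun i j hij => ?_
  have hi : p i ∈ A := hsub (e.symm i).2
  have hj : p j ∈ A := hsub (e.symm j).2
  exact hA _ hi _ hj (fun hc => hij (hp hc))

/-- If all pairwise distances between distinct points of `A ⊆ ℝ²` lie in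
`{n/2 + 1/8 : n ∈ ℕ}`, then `A` has at most 3 elements. -/
theorem distance_set_half_int_shift_eighth (A : Set (EuclideanSpace ℝ (Fin 2)))
    (hA : ∀ a ∈ A, ∀ a' ∈ A, a ≠ a' → ∃ n : ℕ, dist a a' = (n : ℝ) / 2 + 1 / 8) :
    A.Finite ∧ A.ncard ≤ 3 := by
  have hfin : A.Finite := by
    by_contra hinf
    obtain ⟨t, hts, htc⟩ := Set.Infinite.exists_subset_card_eq hinf 4
    exact no_finset_four A hA t hts htc
  refine ⟨hfin, ?_⟩
  by_contra hle
  push_neg at hle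
  obtain ⟨t, hts, htc⟩ := hfin.toFinset.exists_subset_card_eq
    (by rwa [Set.ncard_eq_toFinset_card A hfin] at hle : 4 ≤ hfin.toFinset.card)
  exact no_finset_four A hA t (fun x hx => hfin.mem_toFinset.mp (hts hx)) htc
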